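/- For θ ∈ [0, 2π], α real with |α| ≤ 1/h, and h a positive integer, the sum F_α(h, θ) = Σ_{n=1}^h cos(2nθ)/(n q^{2nα + n/(h log q)}) satisfies F_α(h, θ) = log min{h, 1/min(2θ mod 2π, 2π − (2θ mod 2π))} + O(1), with an absolute implied constant (depending only on q). -/

import Mathlib

open Finset

private lemma abs_exp_sub_one (x : ℝ) : |Real.exp x - 1| ≤ |x| * Real.exp |x| := by
  rcases le_or_gt 0 x with hx | hx
  · rw [abs_of_nonneg hx, abs_of_nonneg (by linarith [Real.one_le_exp hx] : (0:ℝ) ≤ Real.exp x - 1)]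
    have h1 : 1 - x ≤ Real.exp (-x) := by linarith [Real.add_one_le_exp (-x)]
    have h2 : Real.exp (-x) * Real.exp x = 1 := by rw [← Real.exp_add]; simp
    nlinarith [Real.exp_pos x]
  · have h1 := Real.add_one_le_exp x
    have h2 : Real.exp x ≤ 1 := Real.exp_le_one_iff.mpr hx.le
    rw [abs_of_neg hx, abs_of_nonpos (by linarith)]
    have h3 : (1:ℝ) ≤ Real.exp (-x) := Real.one_le_exp (by linarith)
    nlinarith

private lemma harmonic_est (h : ℕ) (hh : 1 ≤ h) :
    |(∑ n ∈ Icc 1 h, (1:ℝ)/n) - Real.log h| ≤ 1 := by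
  have he : (∑ n ∈ Icc 1 h, (1:ℝ)/n) = ((harmonic h : ℚ) : ℝ) := by
    rw [harmonic_eq_sum_Icc]; push_cast; simp [one_div]
  have h1 : Real.log h ≤ ((harmonic h : ℚ) : ℝ) := by
    refine le_trans ?_ (log_add_one_le_harmonic h)
    have : (h:ℝ) ≤ ((h+1 : ℕ) : ℝ) := by push_cast; linarith
    exact Real.log_le_log (by exact_mod_cast hh) this
  have h2 : ((harmonic h : ℚ) : ℝ) ≤ 1 + Real.log h := harmonic_le_one_add_log h
  rw [he, abs_le]; constructor <;> linarith

private lemma ctri (a b : ℂ) : ‖a - b‖ ≤ ‖a‖ + ‖b‖ := by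
  exact norm_sub_le a b

private lemma dirichlet_bound (δ : ℝ) (hs : 0 < Real.sin (δ/2)) (N : ℕ) :
    |∑ n ∈ Icc 1 N, Real.cos (n * δ)| ≤ 1 / Real.sin (δ/2) + 1 := by
  set s := Real.sin (δ/2) with hsdef
  set z : ℂ := Complex.exp (δ * Complex.I) with hz
  have hzn : ∀ n : ℕ, z ^ n = Complex.exp ((n * δ : ℝ) * Complex.I) := by
    intro n
    rw [hz, ← Complex.exp_nat_mul]
    push_cast
    ring_nf
  have habs : ‖z - 1‖ = 2 * s := by
    have hre : (z - 1).re = Real.cos δ - 1 := by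
      rw [hz, Complex.sub_re, Complex.one_re]
      simp [Complex.exp_ofReal_mul_I_re]
    have him : (z - 1).im = Real.sin δ := by
      rw [hz, Complex.sub_im, Complex.one_im]
      simp [Complex.exp_ofReal_mul_I_im]
    have hsq : Real.sin (δ/2) ^ 2 = 1/2 - Real.cos δ / 2 := by
      have := Real.sin_sq_eq_half_sub (δ/2)
      rw [show 2 * (δ/2) = δ by ring] at this
      linarith
    rw [Complex.norm_def, Complex.normSq_apply, hre, him]
    have : (Real.cos δ - 1) * (Real.cos δ - 1) + Real.sin δ * Real.sin δ = (2*s)^2 := by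
      have hpy := Real.sin_sq_add_cos_sq δ
      rw [hsdef]; nlinarith
    rw [this]
    exact Real.sqrt_sq (by positivity)
  have hz1 : z ≠ 1 := by
    intro hcon
    rw [hcon] at habs
    simp at habs
    nlinarith
  have hsum : (∑ n ∈ Icc 1 N, z ^ n) = (z ^ (N+1) - 1)/(z - 1) - 1 := by
    have h1 : (∑ n ∈ range (N+1), z ^ n) = (z ^ (N+1) - 1)/(z - 1) := geom_sum_eq hz1 (N+1)
    have h2 : (∑ n ∈ range (N+1), z ^ n) = 1 + ∑ n ∈ Icc 1 N, z ^ n := by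
      rw [range_eq_Ico, Finset.sum_eq_sum_Ico_succ_bot (Nat.succ_pos N), Nat.succ_eq_add_one, Finset.Ico_add_one_right_eq_Icc]
      simp
    rw [h2] at h1
    linear_combination h1
  have hcos : (∑ n ∈ Icc 1 N, Real.cos (n * δ)) = (∑ n ∈ Icc 1 N, z ^ n).re := by
    rw [Complex.re_sum]
    refine Finset.sum_congr rfl fun n _ => ?_
    rw [hzn n, Complex.exp_ofReal_mul_I_re]
  rw [hcos]
  have hzabs : ‖z‖ = 1 := by
    rw [hz]; exact Complex.norm_exp_ofReal_mul_I δ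
  have h1 : ‖z ^ (N+1) - 1‖ ≤ 2 := by
    calc ‖z ^ (N+1) - 1‖ ≤ ‖z ^ (N+1)‖ + ‖(1:ℂ)‖ := ctri _ _
      _ = 2 := by rw [norm_pow, hzabs]; norm_num
  calc |(∑ n ∈ Icc 1 N, z ^ n).re| ≤ ‖∑ n ∈ Icc 1 N, z ^ n‖ :=
        Complex.abs_re_le_norm _
    _ = ‖(z ^ (N+1) - 1)/(z - 1) - 1‖ := by rw [hsum]
    _ ≤ ‖(z ^ (N+1) - 1)/(z - 1)‖ + ‖(1:ℂ)‖ := ctri _ _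
    _ ≤ 1 / s + 1 := by
        simp only [norm_one, norm_div]
        have hd : ‖z ^ (N+1) - 1‖ / ‖z - 1‖ ≤ 1 / s := by
          rw [habs, div_le_div_iff₀ (by positivity) hs]
          nlinarith
        linarith

private lemma abel_aux (δ M : ℝ)
    (hM : ∀ N : ℕ, |∑ n ∈ Icc 1 N, Real.cos (n * δ)| ≤ M) (h : ℕ) :
    ∀ j a : ℕ, a + j = h →
      |(∑ n ∈ Icc (a+1) h, Real.cos (n * δ)/n) +
        (∑ n ∈ Icc 1 a, Real.cos (n * δ))/(a+1)| ≤ M/(a+1) := by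
  intro j
  induction j with
  | zero =>
    intro a ha
    subst ha
    simp only [Nat.add_zero]
    rw [show Icc (a+1) a = ∅ from Finset.Icc_eq_empty (by omega), Finset.sum_empty, zero_add,
      abs_div]
    rw [abs_of_pos (by positivity : (0:ℝ) < (a:ℝ)+1)]
    gcongr
    exact hM a
  | succ j ih =>
    intro a ha
    have hIH := ih (a+1) (by omega)
    simp only [show a+1+1 = a+2 from rfl] at hIH
    push_cast at hIH
    have hah : a + 1 ≤ h := by omega
    have e1 : (∑ n ∈ Icc (a+1) h, Real.cos (n * δ)/n)
        = Real.cos (((a:ℝ)+1) * δ)/((a:ℝ)+1) + ∑ n ∈ Icc (a+2) h, Real.cos (n * δ)/n := by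
      rw [Finset.Icc_eq_cons_Ioc hah, Finset.sum_cons,
        show Finset.Ioc (a+1) h = Finset.Icc (a+2) h from (Finset.Icc_add_one_left_eq_Ioc ..).symm]
      push_cast
      ring
    have e2 : (∑ n ∈ Icc 1 (a+1), Real.cos (n * δ))
        = (∑ n ∈ Icc 1 a, Real.cos (n * δ)) + Real.cos (((a:ℝ)+1) * δ) := by
      rw [Finset.sum_Icc_succ_top (by omega : 1 ≤ a+1)]
      push_cast
      ring
    have hx : (0:ℝ) < (a:ℝ) + 1 := by positivity
    have hy : (0:ℝ) < (a:ℝ) + 2 := by positivity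
    have key : (∑ n ∈ Icc (a+1) h, Real.cos (n * δ)/n) +
        (∑ n ∈ Icc 1 a, Real.cos (n * δ))/((a:ℝ)+1)
        = ((∑ n ∈ Icc (a+2) h, Real.cos (n * δ)/n)
            + (∑ n ∈ Icc 1 (a+1), Real.cos (n * δ))/((a:ℝ)+2))
          + (∑ n ∈ Icc 1 (a+1), Real.cos (n * δ)) * (1/((a:ℝ)+1) - 1/((a:ℝ)+2)) := by
      rw [e1, e2]
      field_simp
      ring
    rw [show ((a:ℝ)+1) = (((a:ℕ):ℝ)+1) from rfl] at key
    rw [key]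
    have hpos : (0:ℝ) ≤ 1/((a:ℝ)+1) - 1/((a:ℝ)+2) := by
      rw [sub_nonneg]
      exact one_div_le_one_div_of_le hx (by linarith)
    have hD'le : |∑ n ∈ Icc 1 (a+1), Real.cos (n * δ)| ≤ M := hM (a+1)
    have hIH' : |(∑ n ∈ Icc (a+2) h, Real.cos (n * δ)/n)
        + (∑ n ∈ Icc 1 (a+1), Real.cos (n * δ))/((a:ℝ)+2)| ≤ M/((a:ℝ)+2) := by
      rw [show ((a:ℝ)+1+1) = ((a:ℝ)+2) from by ring] at hIH
      exact hIH
    calc |((∑ n ∈ Icc (a+2) h, Real.cos (n * δ)/n)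
            + (∑ n ∈ Icc 1 (a+1), Real.cos (n * δ))/((a:ℝ)+2))
          + (∑ n ∈ Icc 1 (a+1), Real.cos (n * δ)) * (1/((a:ℝ)+1) - 1/((a:ℝ)+2))|
        ≤ |(∑ n ∈ Icc (a+2) h, Real.cos (n * δ)/n)
            + (∑ n ∈ Icc 1 (a+1), Real.cos (n * δ))/((a:ℝ)+2)|
          + |∑ n ∈ Icc 1 (a+1), Real.cos (n * δ)| * (1/((a:ℝ)+1) - 1/((a:ℝ)+2)) := by
          refine le_trans (abs_add_le _ _) ?_
          rw [abs_mul, abs_of_nonneg hpos]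
      _ ≤ M/((a:ℝ)+2) + M * (1/((a:ℝ)+1) - 1/((a:ℝ)+2)) :=
          add_le_add hIH' (mul_le_mul_of_nonneg_right hD'le hpos)
      _ = M/((a:ℝ)+1) := by field_simp; ring

private lemma tail_bound (δ M : ℝ)
    (hM : ∀ N : ℕ, |∑ n ∈ Icc 1 N, Real.cos (n * δ)| ≤ M) (h a : ℕ) (hah : a ≤ h) :
    |∑ n ∈ Icc (a+1) h, Real.cos (n * δ)/n| ≤ 2*M/(a+1) := by
  have h1 := abel_aux δ M hM h (h - a) a (by omega)
  have h2 : |(∑ n ∈ Icc 1 a, Real.cos (n * δ))/((a:ℝ)+1)| ≤ M/((a:ℝ)+1) := by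
    rw [abs_div, abs_of_pos (by positivity : (0:ℝ) < (a:ℝ)+1)]
    gcongr
    exact hM a
  calc |∑ n ∈ Icc (a+1) h, Real.cos (n * δ)/n|
      ≤ |(∑ n ∈ Icc (a+1) h, Real.cos (n * δ)/n) +
          (∑ n ∈ Icc 1 a, Real.cos (n * δ))/((a:ℝ)+1)| +
        |(∑ n ∈ Icc 1 a, Real.cos (n * δ))/((a:ℝ)+1)| := by
        have h3 := abs_add_le ((∑ n ∈ Icc (a+1) h, Real.cos (n * δ)/n) +
          (∑ n ∈ Icc 1 a, Real.cos (n * δ))/((a:ℝ)+1))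
          (-((∑ n ∈ Icc 1 a, Real.cos (n * δ))/((a:ℝ)+1)))
        simp only [add_neg_cancel_right, abs_neg] at h3
        exact h3
    _ ≤ M/((a:ℝ)+1) + M/((a:ℝ)+1) := add_le_add h1 h2
    _ = 2*M/((a:ℝ)+1) := by ring

private lemma cos_err (m : ℕ) (δ : ℝ) (h0 : 0 ≤ δ) (hmδ : δ * m ≤ 1) :
    |(∑ n ∈ Icc 1 m, Real.cos (n * δ)/n) - ∑ n ∈ Icc 1 m, (1:ℝ)/n| ≤ 1/2 := by
  rcases Nat.eq_zero_or_pos m with hm0 | hm1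
  · subst hm0; simp
  have hm' : (1:ℝ) ≤ m := by exact_mod_cast hm1
  have hmpos : (0:ℝ) < m := by linarith
  have hδm : δ ≤ 1/(m:ℝ) := by rw [le_div_iff₀ hmpos]; exact hmδ
  rw [← Finset.sum_sub_distrib]
  refine le_trans (Finset.abs_sum_le_sum_abs _ _) ?_
  have hb : ∀ n ∈ Icc 1 m, |Real.cos (n*δ)/n - 1/n| ≤ 1/(2*(m:ℝ)) := by
    intro n hn
    rw [Finset.mem_Icc] at hn
    have hn1 : (1:ℝ) ≤ n := by exact_mod_cast hn.1
    have hnm : (n:ℝ) ≤ m := by exact_mod_cast hn.2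
    have hnpos : (0:ℝ) < n := by linarith
    have hcos : |Real.cos (n*δ) - 1| ≤ ((n:ℝ)*δ)^2/2 := by
      have h1 := Real.one_sub_sq_div_two_le_cos (x := (n:ℝ)*δ)
      have h2 := Real.cos_le_one ((n:ℝ)*δ)
      rw [abs_le]; constructor <;> nlinarith
    have heq : Real.cos (n*δ)/n - 1/n = (Real.cos (n*δ) - 1)/n := by ring
    rw [heq, abs_div, abs_of_pos hnpos, div_le_iff₀ hnpos]
    have hsq : δ*δ ≤ (1/(m:ℝ))*(1/(m:ℝ)) := mul_le_mul hδm hδm h0 (by positivity)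
    have key : ((n:ℝ)*δ)^2/2 ≤ 1/(2*(m:ℝ)) * n := by
      have h3 : (n:ℝ)*(n:ℝ)*(δ*δ) ≤ (n:ℝ)*(n:ℝ)*((1/(m:ℝ))*(1/(m:ℝ))) :=
        mul_le_mul_of_nonneg_left hsq (by positivity)
      have hq : (n:ℝ)/(m:ℝ) ≤ 1 := by rw [div_le_one hmpos]; exact hnm
      have h4 : (n:ℝ)*(n:ℝ)*((1/(m:ℝ))*(1/(m:ℝ))) ≤ (n:ℝ)/(m:ℝ) := by
        calc (n:ℝ)*(n:ℝ)*((1/(m:ℝ))*(1/(m:ℝ))) = ((n:ℝ)/m)*((n:ℝ)/m) := by ring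
          _ ≤ ((n:ℝ)/m)*1 := mul_le_mul_of_nonneg_left hq (by positivity)
          _ = (n:ℝ)/m := by ring
      calc ((n:ℝ)*δ)^2/2 = ((n:ℝ)*(n:ℝ)*(δ*δ))/2 := by ring
        _ ≤ ((n:ℝ)/(m:ℝ))/2 := by linarith
        _ = 1/(2*(m:ℝ)) * n := by ring
    linarith [hcos.trans key]
  calc ∑ n ∈ Icc 1 m, |Real.cos (n*δ)/n - 1/n| ≤ (Icc 1 m).card • (1/(2*(m:ℝ))) :=
        Finset.sum_le_card_nsmul _ _ _ hb
    _ = 1/2 := by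
        rw [Nat.card_Icc, nsmul_eq_mul, show m + 1 - 1 = m from by omega]
        field_simp

private lemma core (h : ℕ) (hh : 1 ≤ h) (δ : ℝ) (h0 : 0 ≤ δ) (hπ : δ ≤ Real.pi) :
    |(∑ n ∈ Icc 1 h, Real.cos (n * δ)/n) -
      Real.log (if δ = 0 then (h:ℝ) else min (h:ℝ) (1/δ))| ≤ 20 := by
  have hh' : (1:ℝ) ≤ h := by exact_mod_cast hh
  rcases le_or_gt (δ * h) 1 with hcase | hcase
  · -- small δ : target is log h
    have hifeq : (if δ = 0 then (h:ℝ) else min (h:ℝ) (1/δ)) = (h:ℝ) := by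
      split_ifs with hδ0
      · rfl
      · have hδpos : 0 < δ := lt_of_le_of_ne h0 (Ne.symm hδ0)
        rw [min_eq_left]
        rw [le_div_iff₀ hδpos]
        nlinarith
    rw [hifeq]
    have e1 := cos_err h δ h0 hcase
    have e2 := harmonic_est h hh
    have tri := abs_sub_le (∑ n ∈ Icc 1 h, Real.cos (n*δ)/n)
      (∑ n ∈ Icc 1 h, (1:ℝ)/n) (Real.log h)
    linarith
  · -- large δ : target is log (1/δ)
    have hδpos : 0 < δ := by nlinarith
    have hδne : δ ≠ 0 := ne_of_gt hδpos
    have hinv_lt : 1/δ < h := by rw [div_lt_iff₀ hδpos]; nlinarith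
    have hifeq : (if δ = 0 then (h:ℝ) else min (h:ℝ) (1/δ)) = 1/δ := by
      rw [if_neg hδne, min_eq_right hinv_lt.le]
    rw [hifeq]
    have hs : δ / Real.pi ≤ Real.sin (δ/2) := by
      have h1 := Real.mul_le_sin (x := δ/2) (by linarith) (by linarith)
      calc δ/Real.pi = 2/Real.pi * (δ/2) := by ring
        _ ≤ Real.sin (δ/2) := h1
    have hspos : 0 < Real.sin (δ/2) :=
      lt_of_lt_of_le (by positivity) hs
    set M := 1/Real.sin (δ/2) + 1 with hMdef
    have hMb : ∀ N : ℕ, |∑ n ∈ Icc 1 N, Real.cos (n*δ)| ≤ M := dirichlet_bound δ hspos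
    have hM0 : 0 ≤ M := le_trans (abs_nonneg _) (hMb 0)
    have hMle : M ≤ 2*Real.pi/δ := by
      have h1 : 1/Real.sin (δ/2) ≤ Real.pi/δ := by
        have := one_div_le_one_div_of_le (by positivity : (0:ℝ) < δ/Real.pi) hs
        rwa [one_div_div] at this
      have h2 : 1 ≤ Real.pi/δ := by rw [le_div_iff₀ hδpos]; linarith
      have : 2*Real.pi/δ = Real.pi/δ + Real.pi/δ := by ring
      linarith
    set m := ⌊1/δ⌋₊ with hmdef
    have hmle : (m:ℝ) ≤ 1/δ := Nat.floor_le (by positivity)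
    have hmlt : 1/δ < (m:ℝ) + 1 := Nat.lt_floor_add_one _
    have hmh : m ≤ h := by
      have : (m:ℝ) < h := lt_of_le_of_lt hmle hinv_lt
      exact_mod_cast this.le
    have hsplit : (∑ n ∈ Icc 1 h, Real.cos (n*δ)/n)
        = (∑ n ∈ Icc 1 m, Real.cos (n*δ)/n) + ∑ n ∈ Icc (m+1) h, Real.cos (n*δ)/n := by
      rw [show Icc 1 h = Ioc 0 h from by ext x; simp [Finset.mem_Icc, Finset.mem_Ioc]; omega,
        show Icc 1 m = Ioc 0 m from by ext x; simp [Finset.mem_Icc, Finset.mem_Ioc]; omega,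
        show Icc (m+1) h = Ioc m h from by ext x; simp [Finset.mem_Icc, Finset.mem_Ioc]]
      exact (Finset.sum_Ioc_consecutive _ (Nat.zero_le m) hmh).symm
    rw [hsplit]
    have htail : |∑ n ∈ Icc (m+1) h, Real.cos (n*δ)/n| ≤ 4*Real.pi := by
      have h1 := tail_bound δ M hMb h m hmh
      have ha : 1/((m:ℝ)+1) ≤ δ := by
        rw [div_le_iff₀ (by positivity)]
        have h2 := mul_lt_mul_of_pos_left hmlt hδpos
        rw [mul_one_div_cancel hδne] at h2
        linarith
      calc |∑ n ∈ Icc (m+1) h, Real.cos (n*δ)/n| ≤ 2*M/((m:ℝ)+1) := h1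
        _ = 2*M*(1/((m:ℝ)+1)) := by ring
        _ ≤ 2*(2*Real.pi/δ)*δ := by
            have hb1 : 2*M*(1/((m:ℝ)+1)) ≤ 2*M*δ :=
              mul_le_mul_of_nonneg_left ha (by linarith)
            have hb2 : 2*M*δ ≤ 2*(2*Real.pi/δ)*δ := by
              have := mul_le_mul_of_nonneg_right hMle hδpos.le
              nlinarith
            linarith
        _ = 4*Real.pi := by field_simp; ring
    have hhead : |(∑ n ∈ Icc 1 m, Real.cos (n*δ)/n) - Real.log (1/δ)| ≤ 4 := by
      rcases Nat.eq_zero_or_pos m with hm0 | hm1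
      · rw [hm0]
        simp only [show Icc 1 0 = (∅ : Finset ℕ) from rfl, Finset.sum_empty, zero_sub, abs_neg]
        have hδ1 : 1 < δ := by
          have : 1/δ < 1 := by
            rw [hm0] at hmlt; push_cast at hmlt; linarith
          rw [div_lt_one hδpos] at this; exact this
        rw [one_div, Real.log_inv, abs_neg, abs_of_nonneg (Real.log_nonneg hδ1.le)]
        have := Real.log_le_sub_one_of_pos hδpos
        have := Real.pi_le_four
        linarith
      · have hm1' : (1:ℝ) ≤ m := by exact_mod_cast hm1
        have hδm : δ * m ≤ 1 := by
          have := mul_le_mul_of_nonneg_left hmle hδpos.le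
          calc δ * m ≤ δ * (1/δ) := this
            _ = 1 := by field_simp
        have e1 := cos_err m δ h0 hδm
        have e2 := harmonic_est m hm1
        have hl1 : Real.log m ≤ Real.log (1/δ) := Real.log_le_log (by linarith) hmle
        have hl2 : Real.log (1/δ) ≤ Real.log m + 1 := by
          have ha1 : Real.log (1/δ) ≤ Real.log ((m:ℝ)+1) :=
            Real.log_le_log (by positivity) hmlt.le
          have ha2 : Real.log ((m:ℝ)+1) ≤ Real.log (2*m) :=
            Real.log_le_log (by positivity) (by linarith)
          have ha3 : Real.log (2*(m:ℝ)) = Real.log 2 + Real.log m :=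
            Real.log_mul two_ne_zero (by positivity)
          have ha4 : Real.log 2 ≤ 1 := by
            have := Real.log_le_sub_one_of_pos (by norm_num : (0:ℝ) < 2)
            linarith
          linarith
        have hlog : |Real.log m - Real.log (1/δ)| ≤ 1 := by
          rw [abs_le]; constructor <;> linarith
        have tri1 := abs_sub_le (∑ n ∈ Icc 1 m, Real.cos (n*δ)/n)
          (∑ n ∈ Icc 1 m, (1:ℝ)/n) (Real.log (1/δ))
        have tri2 := abs_sub_le (∑ n ∈ Icc 1 m, (1:ℝ)/n)
          (Real.log m) (Real.log (1/δ))
        linarith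
    have tri : |((∑ n ∈ Icc 1 m, Real.cos (n*δ)/n) + ∑ n ∈ Icc (m+1) h, Real.cos (n*δ)/n)
        - Real.log (1/δ)|
        ≤ |(∑ n ∈ Icc 1 m, Real.cos (n*δ)/n) - Real.log (1/δ)|
          + |∑ n ∈ Icc (m+1) h, Real.cos (n*δ)/n| := by
      rw [show ((∑ n ∈ Icc 1 m, Real.cos (n*δ)/n) + ∑ n ∈ Icc (m+1) h, Real.cos (n*δ)/n)
          - Real.log (1/δ)
          = ((∑ n ∈ Icc 1 m, Real.cos (n*δ)/n) - Real.log (1/δ))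
            + ∑ n ∈ Icc (m+1) h, Real.cos (n*δ)/n from by ring]
      exact abs_add_le _ _
    have := Real.pi_le_four
    linarith

/-- For `θ ∈ [0,2π]`, `|α| ≤ 1/h`, the sum
`F_α(h,θ) = ∑_{n=1}^h cos(2nθ)/(n q^{2nα + n/(h log q)})` satisfies
`F_α(h,θ) = log min{h, 1/\bar{2θ}} + O(1)`, where `\bar{2θ}` is the distance from
`2θ` to the nearest multiple of `2π` (and the minimum is `h` when `\bar{2θ} = 0`). -/
theorem cosine_sum_asymptotic (q : ℝ) (hq : 1 < q) :
    ∃ C : ℝ, 0 < C ∧ ∀ h : ℕ, 1 ≤ h → ∀ θ ∈ Set.Icc (0 : ℝ) (2 * Real.pi),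
      ∀ α : ℝ, |α| ≤ 1 / h →
      |(∑ n ∈ Finset.Icc 1 h,
          Real.cos (2 * n * θ) /
            (n * q ^ (2 * n * α + n / (h * Real.log q)))) -
        Real.log
          (if |2 * θ - 2 * Real.pi * (round (θ / Real.pi) : ℤ)| = 0 then (h : ℝ)
           else min (h : ℝ) (1 / |2 * θ - 2 * Real.pi * (round (θ / Real.pi) : ℤ)|))| ≤
      C := by
  have hq0 : (0:ℝ) < q := by linarith
  have hlq : 0 < Real.log q := Real.log_pos hq
  set K := 2 * Real.log q + 1 with hKdef
  have hK1 : 1 ≤ K := by linarith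
  refine ⟨K * Real.exp K + 20, by positivity, ?_⟩
  intro h hh θ _hθ α hα
  have hh' : (0:ℝ) < h := by exact_mod_cast hh
  set k : ℤ := round (θ / Real.pi) with hkdef
  set δ := |2 * θ - 2 * Real.pi * (k:ℝ)| with hδdef
  have hδ0 : 0 ≤ δ := abs_nonneg _
  have hδπ : δ ≤ Real.pi := by
    have hπ0 : (0:ℝ) < Real.pi := Real.pi_pos
    have hr : |θ / Real.pi - (k:ℝ)| ≤ 1/2 := abs_sub_round (θ / Real.pi)
    have he : 2*θ - 2*Real.pi*(k:ℝ) = (2*Real.pi) * (θ/Real.pi - (k:ℝ)) := by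
      field_simp
    rw [hδdef, he, abs_mul, abs_of_pos (by positivity : (0:ℝ) < 2*Real.pi)]
    calc 2*Real.pi * |θ/Real.pi - (k:ℝ)| ≤ 2*Real.pi * (1/2) :=
          mul_le_mul_of_nonneg_left hr (by positivity)
      _ = Real.pi := by ring
  set β := 2 * α * Real.log q + 1 / (h:ℝ) with hβdef
  have hβ : |β| ≤ K / h := by
    have h1 : |2 * α * Real.log q| ≤ 2 * Real.log q / h := by
      rw [show 2 * α * Real.log q = (2 * Real.log q) * α from by ring, abs_mul,
        abs_of_pos (by positivity : (0:ℝ) < 2 * Real.log q)]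
      calc 2 * Real.log q * |α| ≤ 2 * Real.log q * (1/h) :=
            mul_le_mul_of_nonneg_left hα (by positivity)
        _ = 2 * Real.log q / h := by ring
    calc |β| ≤ |2 * α * Real.log q| + |1/(h:ℝ)| := abs_add_le _ _
      _ ≤ 2 * Real.log q / h + 1/h := by
          have : |1/(h:ℝ)| = 1/h := abs_of_pos (by positivity)
          linarith
      _ = K/h := by rw [hKdef]; ring
  have hterm : ∀ n ∈ Finset.Icc 1 h,
      Real.cos (2 * n * θ) / (n * q ^ (2 * n * α + n / (h * Real.log q)))
      = Real.cos (n * δ)/n + Real.cos (n * δ) * (Real.exp (-(n * β)) - 1) / n := by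
    intro n hn
    rw [Finset.mem_Icc] at hn
    have hn0 : (0:ℝ) < n := by
      have : (1:ℝ) ≤ n := by exact_mod_cast hn.1
      linarith
    have hcos : Real.cos (2 * n * θ) = Real.cos (n * δ) := by
      have e1 : 2 * (n:ℝ) * θ = (n:ℝ) * (2*θ - 2*Real.pi*(k:ℝ)) + ((n * k : ℤ) : ℝ) * (2 * Real.pi) := by
        push_cast
        ring
      rw [e1, Real.cos_add_int_mul_two_pi]
      rw [hδdef]
      have e2 : (n:ℝ) * |2*θ - 2*Real.pi*(k:ℝ)| = |(n:ℝ) * (2*θ - 2*Real.pi*(k:ℝ))| := by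
        rw [abs_mul, abs_of_pos hn0]
      rw [e2, Real.cos_abs]
    have hexp : q ^ (2 * (n:ℝ) * α + (n:ℝ) / (h * Real.log q)) = Real.exp ((n:ℝ) * β) := by
      rw [Real.rpow_def_of_pos hq0]
      congr 1
      rw [hβdef]
      field_simp
    rw [hcos, hexp, Real.exp_neg]
    have hE := Real.exp_pos ((n:ℝ) * β)
    field_simp
    ring
  rw [Finset.sum_congr rfl hterm, Finset.sum_add_distrib]
  have h2 : |∑ n ∈ Finset.Icc 1 h, Real.cos (n * δ) * (Real.exp (-(n * β)) - 1) / n|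
      ≤ K * Real.exp K := by
    refine le_trans (Finset.abs_sum_le_sum_abs _ _) ?_
    have hhβ : (h:ℝ) * |β| ≤ K := by
      calc (h:ℝ) * |β| ≤ (h:ℝ) * (K/h) := mul_le_mul_of_nonneg_left hβ hh'.le
        _ = K := by field_simp
    have hb : ∀ n ∈ Finset.Icc 1 h,
        |Real.cos (n * δ) * (Real.exp (-(n * β)) - 1) / n| ≤ |β| * Real.exp K := by
      intro n hn
      rw [Finset.mem_Icc] at hn
      have hn1 : (1:ℝ) ≤ n := by exact_mod_cast hn.1
      have hnh : (n:ℝ) ≤ h := by exact_mod_cast hn.2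
      have hn0 : (0:ℝ) < n := by linarith
      have habs : |(-((n:ℝ) * β))| = (n:ℝ) * |β| := by
        rw [abs_neg, abs_mul, abs_of_pos hn0]
      have hnβ : (n:ℝ) * |β| ≤ K := by
        calc (n:ℝ) * |β| ≤ (h:ℝ) * |β| := mul_le_mul_of_nonneg_right hnh (abs_nonneg _)
          _ ≤ K := hhβ
      have hEK : |Real.exp (-((n:ℝ) * β)) - 1| ≤ (n:ℝ) * |β| * Real.exp K := by
        refine le_trans (abs_exp_sub_one _) ?_
        rw [habs]
        exact mul_le_mul_of_nonneg_left (Real.exp_le_exp.mpr hnβ) (by positivity)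
      have hcos1 : |Real.cos ((n:ℝ) * δ)| ≤ 1 := Real.abs_cos_le_one _
      have hnum : |Real.cos ((n:ℝ) * δ)| * |Real.exp (-((n:ℝ) * β)) - 1|
          ≤ (n:ℝ) * |β| * Real.exp K := by
        calc |Real.cos ((n:ℝ) * δ)| * |Real.exp (-((n:ℝ) * β)) - 1|
            ≤ 1 * |Real.exp (-((n:ℝ) * β)) - 1| :=
              mul_le_mul_of_nonneg_right hcos1 (abs_nonneg _)
          _ = |Real.exp (-((n:ℝ) * β)) - 1| := one_mul _
          _ ≤ (n:ℝ) * |β| * Real.exp K := hEK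
      rw [abs_div, abs_mul, abs_of_pos hn0]
      calc |Real.cos ((n:ℝ) * δ)| * |Real.exp (-((n:ℝ) * β)) - 1| / (n:ℝ)
          ≤ ((n:ℝ) * |β| * Real.exp K) / (n:ℝ) := by gcongr
        _ = |β| * Real.exp K := by field_simp
    calc ∑ n ∈ Finset.Icc 1 h, |Real.cos (n * δ) * (Real.exp (-(n * β)) - 1) / n|
        ≤ (Finset.Icc 1 h).card • (|β| * Real.exp K) := Finset.sum_le_card_nsmul _ _ _ hb
      _ = (h:ℝ) * (|β| * Real.exp K) := by
          rw [Nat.card_Icc, show h + 1 - 1 = h from by omega, nsmul_eq_mul]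
      _ ≤ K * Real.exp K := by
          have hEpos := Real.exp_pos K
          nlinarith [abs_nonneg β]
  have h1 := core h hh δ hδ0 hδπ
  have tri : |((∑ n ∈ Finset.Icc 1 h, Real.cos (n * δ)/n)
        + ∑ n ∈ Finset.Icc 1 h, Real.cos (n * δ) * (Real.exp (-(n * β)) - 1) / n)
      - Real.log (if δ = 0 then (h:ℝ) else min (h:ℝ) (1/δ))|
      ≤ |(∑ n ∈ Finset.Icc 1 h, Real.cos (n * δ)/n)
          - Real.log (if δ = 0 then (h:ℝ) else min (h:ℝ) (1/δ))|
        + |∑ n ∈ Finset.Icc 1 h, Real.cos (n * δ) * (Real.exp (-(n * β)) - 1) / n| := by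
    rw [show ((∑ n ∈ Finset.Icc 1 h, Real.cos (n * δ)/n)
        + ∑ n ∈ Finset.Icc 1 h, Real.cos (n * δ) * (Real.exp (-(n * β)) - 1) / n)
      - Real.log (if δ = 0 then (h:ℝ) else min (h:ℝ) (1/δ))
      = ((∑ n ∈ Finset.Icc 1 h, Real.cos (n * δ)/n)
          - Real.log (if δ = 0 then (h:ℝ) else min (h:ℝ) (1/δ)))
        + ∑ n ∈ Finset.Icc 1 h, Real.cos (n * δ) * (Real.exp (-(n * β)) - 1) / n from by ring]
    exact abs_add_le _ _
  linarith
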